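/- Let θ be a theta graph (a subdivision of the multigraph with two vertices joined by three parallel edges), with subdivided edges P₁, P₂, P₃ (three internally disjoint paths between the two branch vertices). If a vertex set A meets at least two of the three subdivided edges, then θ contains a cycle of even length passing through a vertex of A. -/

import Mathlib

open SimpleGraph Walk

private lemma path_length_one_of_edge {V : Type*} {G : SimpleGraph V} {u v : V}
    (huv : u ≠ v) {P : G.Walk u v} (hP : P.IsPath) (h : s(u, v) ∈ P.edges) :
    P.length = 1 := by
  cases P with
  | nil => simp at h
  | @cons _ w _ hadj p =>
    rw [edges_cons, List.mem_cons] at h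
    rcases h with h | h
    · have : (u = u ∧ v = w) ∨ (u = w ∧ v = u) := by
        rwa [Sym2.eq_iff] at h
      rcases this with ⟨-, rfl⟩ | ⟨rfl, rfl⟩
      · have hp : p.IsPath := (Walk.cons_isPath_iff _ _).mp hP |>.1
        have : p = Walk.nil := (Walk.isPath_iff_eq_nil (p := p)).mp hp
        subst this
        simp
      · exact absurd rfl huv
    · exfalso
      have : u ∈ p.support := Walk.fst_mem_support_of_mem_edges p h
      exact ((Walk.cons_isPath_iff _ _).mp hP).2 this

private lemma two_paths_isCycle {V : Type*} {G : SimpleGraph V} {u v : V} (huv : u ≠ v)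
    {P Q : G.Walk u v} (hP : P.IsPath) (hQ : Q.IsPath)
    (hdisj : ∀ w, w ∈ P.support → w ∈ Q.support → w = u ∨ w = v)
    (h3 : 3 ≤ P.length + Q.length) :
    (P.append Q.reverse).IsCycle := by
  have hR : Q.reverse.IsPath := hQ.reverse
  have hu_notin_tailP : u ∉ P.support.tail := by
    have := hP.support_nodup
    rw [Walk.support_eq_cons] at this
    exact (List.nodup_cons.mp this).1
  have hv_notin_tailR : v ∉ Q.reverse.support.tail := by
    have := hR.support_nodup
    rw [Walk.support_eq_cons] at this
    exact (List.nodup_cons.mp this).1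
  have hmemR : ∀ x, x ∈ Q.reverse.support → x ∈ Q.support := by
    intro x hx
    rwa [Walk.support_reverse, List.mem_reverse] at hx
  rw [Walk.isCycle_def]
  refine ⟨?_, ?_, ?_⟩
  · -- trail
    rw [Walk.isTrail_def, Walk.edges_append]
    refine List.Nodup.append hP.isTrail.edges_nodup hR.isTrail.edges_nodup ?_
    intro e heP heR
    rw [Walk.edges_reverse, List.mem_reverse] at heR
    induction e using Sym2.ind with
    | _ a b =>
      have haP := Walk.fst_mem_support_of_mem_edges P heP
      have hbP := Walk.snd_mem_support_of_mem_edges P heP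
      have haQ := Walk.fst_mem_support_of_mem_edges Q heR
      have hbQ := Walk.snd_mem_support_of_mem_edges Q heR
      have hab : a ≠ b := G.ne_of_adj (P.adj_of_mem_edges heP)
      have ha := hdisj a haP haQ
      have hb := hdisj b hbP hbQ
      have heq : s(a, b) = s(u, v) := by
        rcases ha with rfl | rfl <;> rcases hb with rfl | rfl <;>
          first | exact rfl | exact absurd rfl hab | exact Sym2.eq_swap
      rw [heq] at heP heR
      have h1 := path_length_one_of_edge huv hP heP
      have h2 := path_length_one_of_edge huv hQ heR
      omega
  · -- not nil
    intro h
    have := congrArg Walk.length h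
    rw [Walk.length_append, Walk.length_reverse] at this
    simp only [Walk.length_nil] at this
    omega
  · -- tail nodup
    rw [Walk.support_append, Walk.support_eq_cons, List.cons_append, List.tail_cons]
    refine List.Nodup.append ?_ ?_ ?_
    · have := hP.support_nodup
      rw [Walk.support_eq_cons] at this
      exact (List.nodup_cons.mp this).2
    · have := hR.support_nodup
      rw [Walk.support_eq_cons] at this
      exact (List.nodup_cons.mp this).2
    · intro x hxP hxR
      have hx1 : x ∈ P.support := List.mem_of_mem_tail hxP
      have hx2 : x ∈ Q.support := hmemR x (List.mem_of_mem_tail hxR)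
      rcases hdisj x hx1 hx2 with rfl | rfl
      · exact hu_notin_tailP hxP
      · exact hv_notin_tailR hxR

private lemma pair_case {V : Type*} {G : SimpleGraph V} (A : Set V) {u v : V} (huv : u ≠ v)
    {P Q : G.Walk u v} (hP : P.IsPath) (hQ : Q.IsPath)
    (hdisj : ∀ w, w ∈ P.support → w ∈ Q.support → w = u ∨ w = v)
    (h3 : 3 ≤ P.length + Q.length)
    (heven : Even (P.length + Q.length))
    (ha : ∃ a ∈ A, a ∈ P.support ∨ a ∈ Q.support) :
    ∃ (w : V) (c : G.Walk w w), c.IsCycle ∧ Even c.length ∧ (∃ a ∈ A, a ∈ c.support) ∧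
      ∀ e ∈ c.edges, e ∈ P.edges ∨ e ∈ Q.edges := by
  refine ⟨u, P.append Q.reverse, two_paths_isCycle huv hP hQ hdisj h3, ?_, ?_, ?_⟩
  · rwa [Walk.length_append, Walk.length_reverse]
  · obtain ⟨a, haA, ha⟩ := ha
    refine ⟨a, haA, ?_⟩
    rw [Walk.mem_support_append_iff]
    rcases ha with h | h
    · exact Or.inl h
    · right; rwa [Walk.support_reverse, List.mem_reverse]
  · intro e he
    rw [Walk.edges_append, List.mem_append, Walk.edges_reverse, List.mem_reverse] at he
    exact he

/-- Every theta graph two of whose subdivided edges meet `A` contains an even `A`-cycle. -/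
theorem theta_contains_even_A_cycle {V : Type*} (G : SimpleGraph V) (A : Set V)
    (u v : V) (huv : u ≠ v)
    (P1 P2 P3 : G.Walk u v)
    (hP1 : P1.IsPath) (hP2 : P2.IsPath) (hP3 : P3.IsPath)
    -- the three paths are internally disjoint
    (h12 : ∀ w, w ∈ P1.support → w ∈ P2.support → w = u ∨ w = v)
    (h23 : ∀ w, w ∈ P2.support → w ∈ P3.support → w = u ∨ w = v)
    (h31 : ∀ w, w ∈ P3.support → w ∈ P1.support → w = u ∨ w = v)
    -- at least two of the paths have length at least 2 (so the theta graph is simple)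
    (hlen : (2 ≤ P1.length ∧ 2 ≤ P2.length) ∨ (2 ≤ P2.length ∧ 2 ≤ P3.length) ∨
      (2 ≤ P3.length ∧ 2 ≤ P1.length))
    -- A meets at least two of the three subdivided edges
    (hA : ((∃ a ∈ A, a ∈ P1.support) ∧ (∃ a ∈ A, a ∈ P2.support)) ∨
      ((∃ a ∈ A, a ∈ P2.support) ∧ (∃ a ∈ A, a ∈ P3.support)) ∨
      ((∃ a ∈ A, a ∈ P3.support) ∧ (∃ a ∈ A, a ∈ P1.support))) :
    ∃ (w : V) (c : G.Walk w w), c.IsCycle ∧ Even c.length ∧ (∃ a ∈ A, a ∈ c.support) ∧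
      ∀ e ∈ c.edges, e ∈ P1.edges ∨ e ∈ P2.edges ∨ e ∈ P3.edges := by
  have hl1 : 1 ≤ P1.length := by
    by_contra h
    exact huv (Walk.eq_of_length_eq_zero (p := P1) (by omega))
  have hl2 : 1 ≤ P2.length := by
    by_contra h
    exact huv (Walk.eq_of_length_eq_zero (p := P2) (by omega))
  have hl3 : 1 ≤ P3.length := by
    by_contra h
    exact huv (Walk.eq_of_length_eq_zero (p := P3) (by omega))
  have h3_12 : 3 ≤ P1.length + P2.length := by omega
  have h3_23 : 3 ≤ P2.length + P3.length := by omega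
  have h3_31 : 3 ≤ P3.length + P1.length := by omega
  -- three ways to conclude, one for each pair
  have use12 : Even (P1.length + P2.length) →
      (∃ a ∈ A, a ∈ P1.support ∨ a ∈ P2.support) →
      ∃ (w : V) (c : G.Walk w w), c.IsCycle ∧ Even c.length ∧ (∃ a ∈ A, a ∈ c.support) ∧
        ∀ e ∈ c.edges, e ∈ P1.edges ∨ e ∈ P2.edges ∨ e ∈ P3.edges := fun he ha => by
    obtain ⟨w, c, hc, he', ha', hedge⟩ := pair_case A huv hP1 hP2 h12 h3_12 he ha
    exact ⟨w, c, hc, he', ha', fun e hme => (hedge e hme).elim Or.inl (Or.inr ∘ Or.inl)⟩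
  have use23 : Even (P2.length + P3.length) →
      (∃ a ∈ A, a ∈ P2.support ∨ a ∈ P3.support) →
      ∃ (w : V) (c : G.Walk w w), c.IsCycle ∧ Even c.length ∧ (∃ a ∈ A, a ∈ c.support) ∧
        ∀ e ∈ c.edges, e ∈ P1.edges ∨ e ∈ P2.edges ∨ e ∈ P3.edges := fun he ha => by
    obtain ⟨w, c, hc, he', ha', hedge⟩ := pair_case A huv hP2 hP3 h23 h3_23 he ha
    exact ⟨w, c, hc, he', ha', fun e hme =>
      (hedge e hme).elim (Or.inr ∘ Or.inl) (Or.inr ∘ Or.inr)⟩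
  have use31 : Even (P3.length + P1.length) →
      (∃ a ∈ A, a ∈ P3.support ∨ a ∈ P1.support) →
      ∃ (w : V) (c : G.Walk w w), c.IsCycle ∧ Even c.length ∧ (∃ a ∈ A, a ∈ c.support) ∧
        ∀ e ∈ c.edges, e ∈ P1.edges ∨ e ∈ P2.edges ∨ e ∈ P3.edges := fun he ha => by
    obtain ⟨w, c, hc, he', ha', hedge⟩ := pair_case A huv hP3 hP1 h31 h3_31 he ha
    exact ⟨w, c, hc, he', ha', fun e hme => (hedge e hme).elim (Or.inr ∘ Or.inr) Or.inl⟩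
  rcases Nat.even_or_odd P1.length with p1 | p1 <;>
    rcases Nat.even_or_odd P2.length with p2 | p2 <;>
    rcases Nat.even_or_odd P3.length with p3 | p3
  all_goals simp only [Nat.even_iff, Nat.odd_iff] at p1 p2 p3
  all_goals first
  -- all same parity: every pair sum is even
  | (rcases hA with ⟨⟨a, ha, has⟩, -⟩ | ⟨⟨a, ha, has⟩, -⟩ | ⟨⟨a, ha, has⟩, -⟩
     · exact use12 (Nat.even_iff.mpr (by omega)) ⟨a, ha, Or.inl has⟩
     · exact use23 (Nat.even_iff.mpr (by omega)) ⟨a, ha, Or.inl has⟩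
     · exact use31 (Nat.even_iff.mpr (by omega)) ⟨a, ha, Or.inl has⟩)
  -- P1 odd one out: use pair (2,3)
  | (refine use23 (Nat.even_iff.mpr (by omega)) ?_
     rcases hA with ⟨-, ⟨a, ha, has⟩⟩ | ⟨⟨a, ha, has⟩, -⟩ | ⟨⟨a, ha, has⟩, -⟩
     · exact ⟨a, ha, Or.inl has⟩
     · exact ⟨a, ha, Or.inl has⟩
     · exact ⟨a, ha, Or.inr has⟩)
  -- P2 odd one out: use pair (3,1)
  | (refine use31 (Nat.even_iff.mpr (by omega)) ?_
     rcases hA with ⟨⟨a, ha, has⟩, -⟩ | ⟨-, ⟨a, ha, has⟩⟩ | ⟨⟨a, ha, has⟩, -⟩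
     · exact ⟨a, ha, Or.inr has⟩
     · exact ⟨a, ha, Or.inl has⟩
     · exact ⟨a, ha, Or.inl has⟩)
  -- P3 odd one out: use pair (1,2)
  | (refine use12 (Nat.even_iff.mpr (by omega)) ?_
     rcases hA with ⟨⟨a, ha, has⟩, -⟩ | ⟨⟨a, ha, has⟩, -⟩ | ⟨-, ⟨a, ha, has⟩⟩
     · exact ⟨a, ha, Or.inl has⟩
     · exact ⟨a, ha, Or.inr has⟩
     · exact ⟨a, ha, Or.inl has⟩)
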